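/- arXiv:1101.0714 — 5 statements merged into one kernel-verified Lean document; each statement's English description precedes it below -/
import Mathlib

section
/- If Y is a locally path connected topological space and f : Y → X is a continuous map to a topological space X, then the map f' : Y → PX defined by the same underlying function is continuous, where PX is the universal Peano space of X. Moreover f' is the unique continuous lift of f through the Peano map p : PX → X. -/
/-- The universal Peano space topology on `X`: generated by all path components of
all open subsets of `X`. -/
def peanoTopology (X : Type*) [TopologicalSpace X] : TopologicalSpace X :=
  TopologicalSpace.generateFrom
    {s | ∃ (U : Set X) (x : X), IsOpen U ∧ x ∈ U ∧ s = pathComponentIn U x}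

/-- If `Y` is locally path connected and `f : Y → X` is continuous, then the same
underlying function is continuous as a map `Y → PX`, and it is the unique continuous
lift of `f` through the Peano map (which is the identity function). -/
theorem continuous_lift_to_peano {Y X : Type*} [tY : TopologicalSpace Y]
    [tX : TopologicalSpace X] [LocallyPathConnectedSpace Y]
    (f : Y → X) (hf : Continuous f) :
    @Continuous Y X tY (peanoTopology X) f ∧
      ∀ g : Y → X, @Continuous Y X tY (peanoTopology X) g → (∀ y, g y = f y) → g = f := by
  constructor
  · rw [peanoTopology, continuous_generateFrom_iff]
    rintro s ⟨U, x, hU, hx, rfl⟩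
    rw [isOpen_iff_mem_nhds]
    intro y hy
    have hyU : f y ∈ U := pathComponentIn_subset hy
    obtain ⟨V, ⟨hVy, hVpc⟩, hVsub⟩ :=
      (path_connected_basis y).mem_iff.mp (hf.continuousAt.preimage_mem_nhds (hU.mem_nhds hyU))
    refine Filter.mem_of_superset hVy fun z hz => ?_
    have : f '' V ⊆ pathComponentIn U (f y) :=
      (hVpc.image hf).subset_pathComponentIn ⟨y, mem_of_mem_nhds hVy, rfl⟩
        (Set.image_subset_iff.mpr hVsub)
    exact pathComponentIn_congr hy ▸ this ⟨z, hz, rfl⟩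
  · exact fun g _ hg => funext hg
end

section
/- For a path connected space X and a locally path connected space Y, the natural map induced by the Peano map gives a bijection between the set of homotopy classes of continuous maps [Y, PX] and [Y, X]. -/
/-- The universal Peano space `PX`: same underlying set, Peano topology. -/
def Peano (X : Type*) := X

instance (X : Type*) [TopologicalSpace X] : TopologicalSpace (Peano X) := peanoTopology X

/-- The universal Peano map, as a function (it is the identity). -/
def peanoMap (X : Type*) [TopologicalSpace X] : Peano X → X := id

/-- The setoid of free homotopy of continuous maps. -/
def htpySetoid (Y X : Type*) [TopologicalSpace Y] [TopologicalSpace X] : Setoid C(Y, X) :=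
  ⟨ContinuousMap.Homotopic, ContinuousMap.Homotopic.equivalence⟩

/-- Free homotopy classes of maps `Y → X`. -/
def HtpyClasses (Y X : Type*) [TopologicalSpace Y] [TopologicalSpace X] :=
  Quotient (htpySetoid Y X)

/-- The homotopy class of a continuous map. -/
def hcls {Y X : Type*} [TopologicalSpace Y] [TopologicalSpace X] (f : C(Y, X)) :
    HtpyClasses Y X := Quotient.mk (htpySetoid Y X) f


open Set Topology Filter unitInterval

section Aux
variable {X Y : Type*} [TopologicalSpace X] [TopologicalSpace Y]

lemma isOpen_peano {X : Type*} [TopologicalSpace X] {U : Set X} (hU : IsOpen U) :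
    IsOpen[peanoTopology X] U := by
  have hrw : U = ⋃₀ {s | ∃ x ∈ U, s = pathComponentIn U x} := by
    ext z
    constructor
    · intro hz
      exact ⟨pathComponentIn U z, ⟨z, hz, rfl⟩, mem_pathComponentIn_self hz⟩
    · rintro ⟨s, ⟨x, hx, rfl⟩, hzs⟩
      exact pathComponentIn_subset hzs
  rw [hrw]
  exact TopologicalSpace.GenerateOpen.sUnion _
    (by rintro s ⟨x, hx, rfl⟩; exact .basic _ ⟨U, x, hU, hx, rfl⟩)

lemma peano_continuous (X : Type*) [TopologicalSpace X] : Continuous (peanoMap X) := by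
  rw [continuous_def]
  intro U hU
  exact isOpen_peano (X := X) hU

lemma continuous_lift [LocallyPathConnectedSpace Y] {f : Y → X} (hf : Continuous f) :
    @Continuous Y (Peano X) _ _ f := by
  show Continuous[_, peanoTopology X] f
  rw [peanoTopology, continuous_generateFrom_iff]
  rintro s ⟨U, x, hU, hx, rfl⟩
  rw [isOpen_iff_mem_nhds]
  intro y hy
  have hyU : f y ∈ U := pathComponentIn_subset hy
  have hopen : IsOpen (f ⁻¹' U) := hU.preimage hf
  have hmem : pathComponentIn (f ⁻¹' U) y ∈ 𝓝 y :=
    (hopen.pathComponentIn y).mem_nhds (mem_pathComponentIn_self hyU)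
  refine Filter.mem_of_superset hmem ?_
  intro z hz
  have hpc : IsPathConnected (f '' pathComponentIn (f ⁻¹' U) y) :=
    (isPathConnected_pathComponentIn (show y ∈ f ⁻¹' U from hyU)).image hf
  have hsub : f '' pathComponentIn (f ⁻¹' U) y ⊆ pathComponentIn U (f y) :=
    hpc.subset_pathComponentIn ⟨y, mem_pathComponentIn_self hyU, rfl⟩
      (Set.image_subset_iff.mpr fun w hw => pathComponentIn_subset hw)
  have : f z ∈ pathComponentIn U (f y) := hsub ⟨z, hz, rfl⟩
  rwa [pathComponentIn_congr hy] at this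

lemma IsPathConnected.prod' {s : Set X} {t : Set Y} (hs : IsPathConnected s)
    (ht : IsPathConnected t) : IsPathConnected (s ×ˢ t) := by
  obtain ⟨a, ha, hja⟩ := hs
  obtain ⟨b, hb, hjb⟩ := ht
  refine ⟨(a, b), ⟨ha, hb⟩, ?_⟩
  rintro ⟨c, d⟩ ⟨hc, hd⟩
  obtain ⟨γ, hγ⟩ := hja hc
  obtain ⟨δ, hδ⟩ := hjb hd
  exact ⟨γ.prod δ, fun u => ⟨hγ u, hδ u⟩⟩

instance prodLocPathConnected [LocallyPathConnectedSpace X] [LocallyPathConnectedSpace Y] :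
    LocallyPathConnectedSpace (X × Y) := by
  refine LocallyPathConnectedSpace.of_bases
    (p := fun (p : X × Y) (st : Set X × Set Y) =>
      (st.1 ∈ 𝓝 p.1 ∧ IsPathConnected st.1) ∧ (st.2 ∈ 𝓝 p.2 ∧ IsPathConnected st.2))
    (s := fun _ st => st.1 ×ˢ st.2) ?_ ?_
  · intro p
    rw [nhds_prod_eq]
    exact (path_connected_basis p.1).prod (path_connected_basis p.2)
  · rintro p st ⟨⟨-, h1⟩, ⟨-, h2⟩⟩
    exact h1.prod' h2

instance : LocallyPathConnectedSpace I := by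
  refine LocallyPathConnectedSpace.of_bases
    (p := fun (_ : I) (ε : ℝ) => 0 < ε)
    (s := fun x ε => Subtype.val ⁻¹' Metric.ball (x : ℝ) ε) ?_ ?_
  · intro x
    rw [nhds_subtype_eq_comap]
    exact Metric.nhds_basis_ball.comap _
  · intro x ε hε
    rw [Topology.IsInducing.subtypeVal.isPathConnected_iff, Subtype.image_preimage_coe]
    have hconv : Convex ℝ (Icc (0:ℝ) 1 ∩ Metric.ball (x:ℝ) ε) :=
      (convex_Icc 0 1).inter (convex_ball _ _)
    exact hconv.isPathConnected ⟨x, x.2, Metric.mem_ball_self hε⟩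

end Aux

/-- For `X` path connected and `Y` locally path connected, composition with the Peano
map induces a bijection `[Y, PX] ≃ [Y, X]`. -/
theorem peano_homotopyClasses_bijection {X Y : Type*} [TopologicalSpace X]
    [TopologicalSpace Y] [PathConnectedSpace X] [LocallyPathConnectedSpace Y] :
    ∃ e : HtpyClasses Y (Peano X) ≃ HtpyClasses Y X,
      ∀ (f : C(Y, Peano X)) (g : C(Y, X)),
        (∀ y, g y = peanoMap X (f y)) → e (hcls f) = hcls g := by
  let pmap : C(Peano X, X) := ⟨peanoMap X, peano_continuous X⟩
  let toX : C(Y, Peano X) → C(Y, X) := fun f => pmap.comp f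
  let ofX : C(Y, X) → C(Y, Peano X) := fun g => ⟨g, continuous_lift g.continuous⟩
  have key : ∀ f g : C(Y, Peano X),
      (htpySetoid Y (Peano X)).r f g ↔ (htpySetoid Y X).r (toX f) (toX g) := by
    intro f g
    constructor
    · intro h
      exact ContinuousMap.Homotopic.comp (ContinuousMap.Homotopic.refl pmap) h
    · rintro ⟨H⟩
      refine ⟨⟨⟨fun p => (H p : Peano X), continuous_lift H.continuous⟩, ?_, ?_⟩⟩
      · intro x; exact H.map_zero_left x
      · intro x; exact H.map_one_left x
  let E : C(Y, Peano X) ≃ C(Y, X) :=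
    ⟨toX, ofX, fun f => ContinuousMap.ext fun y => rfl, fun g => ContinuousMap.ext fun y => rfl⟩
  refine ⟨Quotient.congr E key, ?_⟩
  intro f g hg
  have hfg : toX f = g := ContinuousMap.ext fun y => (hg y).symm
  show Quotient.congr E key (Quotient.mk _ f) = Quotient.mk _ g
  rw [← hfg]
  rfl
end

section
/- Let X be a path connected, locally path connected metric space. If X is not homotopically path Hausdorff, then there exist two paths w, v : [0,1] → X with the same endpoints, not homotopic rel {0,1}, such that v is close to w rel {0,1}: for every ε > 0 there is a path v_ε homotopic to v rel {0,1} with d(w(t), v_ε(t)) < ε for all t ∈ [0,1]. -/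
/-- `X` is homotopically path Hausdorff: for every path `w` from `P` to `Q` and every
non-trivial `α ∈ π₁(X, P)` there are finitely many open sets `U₁,…,U_k` covering `w`
together with a partition `0 = t₀ < … < t_k = 1` with `w([t_{j-1},t_j]) ⊆ U_j` and
marked points `P_j ∈ w([t_{j-1},t_j])`, such that for every return path `v` from `Q`
to `P` compatible with the reversed cover, the concatenation `w * v` does not
represent `α`. -/
def HomotopicallyPathHausdorff (X : Type*) [TopologicalSpace X] : Prop :=
  ∀ (P Q : X) (w : Path P Q) (α : Path P P), ¬α.Homotopic (Path.refl P) →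
    ∃ (k : ℕ) (_ : 0 < k) (U : Fin k → Set X) (Pt : Fin k → X)
      (t : Fin (k + 1) → unitInterval),
        t 0 = 0 ∧ t (Fin.last k) = 1 ∧ StrictMono t ∧
        (∀ j : Fin k, IsOpen (U j) ∧
          ⇑w '' Set.Icc (t j.castSucc) (t j.succ) ⊆ U j ∧
          Pt j ∈ ⇑w '' Set.Icc (t j.castSucc) (t j.succ)) ∧
        ∀ v : Path Q P,
          (∀ j : Fin k, ⇑v '' Set.Icc (t j.castSucc) (t j.succ) ⊆ U j.rev ∧
            Pt j.rev ∈ ⇑v '' Set.Icc (t j.castSucc) (t j.succ)) →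
          ¬(w.trans v).Homotopic α

/-- `v` is close to `w` rel the endpoints `{0,1}`: not homotopic rel endpoints, but for
every `ε > 0` some path homotopic (rel endpoints) to `v` is uniformly `ε`-close to `w`. -/
def PathClose {X : Type*} [MetricSpace X] {P Q : X} (v w : Path P Q) : Prop :=
  ¬v.Homotopic w ∧
    ∀ ε > (0 : ℝ), ∃ v' : Path P Q, v'.Homotopic v ∧
      ∀ s : unitInterval, dist (w s) (v' s) < ε

lemma homotopic_symm₂ {X : Type*} [TopologicalSpace X] {x y : X} {p q : Path x y}
    (h : p.Homotopic q) : p.symm.Homotopic q.symm :=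
  Nonempty.map (fun F => F.symm₂) h

lemma cancel_left {X : Type*} [TopologicalSpace X] {P Q : X} (w : Path P Q) (v : Path Q P)
    (α : Path P P) (hA : (w.trans v).Homotopic α) : v.symm.Homotopic (α.symm.trans w) := by
  have s1 : v.Homotopic ((Path.refl Q).trans v) := ⟨(Path.Homotopy.reflTrans v).symm⟩
  have s2 : ((Path.refl Q).trans v).Homotopic ((w.symm.trans w).trans v) :=
    Path.Homotopic.hcomp ⟨Path.Homotopy.reflSymmTrans w⟩ (Path.Homotopic.refl v)
  have s3 : ((w.symm.trans w).trans v).Homotopic (w.symm.trans (w.trans v)) :=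
    ⟨Path.Homotopy.transAssoc w.symm w v⟩
  have s4 : (w.symm.trans (w.trans v)).Homotopic (w.symm.trans α) :=
    Path.Homotopic.hcomp (Path.Homotopic.refl w.symm) hA
  have h1 : v.Homotopic (w.symm.trans α) :=
    Path.Homotopic.trans (Path.Homotopic.trans (Path.Homotopic.trans s1 s2) s3) s4
  have h2 := homotopic_symm₂ h1
  rwa [Path.trans_symm, Path.symm_symm] at h2

lemma not_homotopic_shift {X : Type*} [TopologicalSpace X] {P Q : X} (w : Path P Q)
    (α : Path P P) (hα : ¬α.Homotopic (Path.refl P)) : ¬(α.symm.trans w).Homotopic w := by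
  intro hB
  have s1 : ((α.symm.trans w).trans w.symm).Homotopic (Path.refl P) :=
    Path.Homotopic.trans (Path.Homotopic.hcomp hB (Path.Homotopic.refl w.symm))
      ⟨(Path.Homotopy.reflTransSymm w).symm⟩
  have s2 : α.symm.Homotopic ((α.symm.trans w).trans w.symm) := by
    refine Path.Homotopic.trans (Path.Homotopic.trans
      (⟨(Path.Homotopy.transRefl α.symm).symm⟩ : α.symm.Homotopic (α.symm.trans (Path.refl P)))
      (Path.Homotopic.hcomp (Path.Homotopic.refl α.symm)
        ⟨Path.Homotopy.reflTransSymm w⟩)) ?_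
    exact ⟨(Path.Homotopy.transAssoc α.symm w w.symm).symm⟩
  have h2 : α.symm.Homotopic (Path.refl P) := Path.Homotopic.trans s2 s1
  have h3 := homotopic_symm₂ h2
  rw [Path.symm_symm, Path.refl_symm] at h3
  exact hα h3

lemma exists_seg (k : ℕ) (hk : 0 < k) (s : ℝ) (h0 : 0 ≤ s) (h1 : s ≤ 1) :
    ∃ j : Fin k, (j : ℝ)/k ≤ s ∧ s ≤ ((j : ℝ)+1)/k := by
  have hkR : (0:ℝ) < k := by exact_mod_cast hk
  by_cases h : ⌊s * k⌋₊ < k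
  · refine ⟨⟨⌊s*k⌋₊, h⟩, ?_, ?_⟩
    · rw [div_le_iff₀ hkR]
      exact Nat.floor_le (by positivity)
    · rw [le_div_iff₀ hkR]
      exact (Nat.lt_floor_add_one _).le
  · push_neg at h
    have h2 : (k:ℝ) ≤ s * k := le_trans (by exact_mod_cast h) (Nat.floor_le (by positivity))
    have hs : s = 1 := le_antisymm h1 (by nlinarith)
    refine ⟨⟨k-1, by omega⟩, ?_, ?_⟩
    · show ((k-1 : ℕ):ℝ)/k ≤ s
      rw [hs, div_le_one hkR]
      exact_mod_cast Nat.sub_le k 1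
    · show s ≤ (((k-1 : ℕ):ℝ)+1)/k
      have hcast : ((k-1:ℕ):ℝ) + 1 = k := by
        have : k - 1 + 1 = k := by omega
        exact_mod_cast this
      rw [hs, hcast, div_self (ne_of_gt hkR)]

/-- In a path connected, locally path connected metric space which is not homotopically
path Hausdorff, there exist two non-homotopic (rel endpoints) paths with the same
endpoints, one close to the other rel `{0,1}`. -/
theorem not_hph_implies_close_paths {X : Type*} [MetricSpace X] [PathConnectedSpace X]
    [LocallyPathConnectedSpace X] (h : ¬HomotopicallyPathHausdorff X) :
    ∃ (P Q : X) (w v : Path P Q), PathClose v w := by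
  unfold HomotopicallyPathHausdorff at h
  push_neg at h
  obtain ⟨P, Q, w, α, hα, H⟩ := h
  refine ⟨P, Q, w, α.symm.trans w, not_homotopic_shift w α hα, ?_⟩
  intro ε hε
  -- uniform continuity of w
  have huc : UniformContinuous w := CompactSpace.uniformContinuous_of_continuous w.continuous
  rw [Metric.uniformContinuous_iff] at huc
  obtain ⟨δ, hδ, hδ'⟩ := huc (ε/2) (by linarith)
  obtain ⟨k, hk, hinv⟩ : ∃ k : ℕ, 0 < k ∧ 1/(k:ℝ) < δ := by
    obtain ⟨n, hn⟩ := exists_nat_one_div_lt hδ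
    exact ⟨n+1, Nat.succ_pos n, by exact_mod_cast hn⟩
  have hkR : (0:ℝ) < k := by exact_mod_cast hk
  -- the partition
  have tmem : ∀ j : Fin (k+1), ((j:ℕ):ℝ)/k ∈ unitInterval := by
    intro j
    constructor
    · positivity
    · rw [div_le_one hkR]
      exact_mod_cast Nat.lt_succ_iff.mp j.2
  set t : Fin (k+1) → unitInterval := fun j => ⟨((j:ℕ):ℝ)/k, tmem j⟩ with htdef
  set Pt : Fin k → X := fun j => w (t j.castSucc) with hPtdef
  set U : Fin k → Set X := fun j => Metric.ball (Pt j) (ε/2) with hUdef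
  have ht0 : t 0 = 0 := by
    apply Subtype.ext
    show ((0 : Fin (k+1)) : ℝ)/k = 0
    simp
  have ht1 : t (Fin.last k) = 1 := by
    apply Subtype.ext
    show ((Fin.last k : ℕ):ℝ)/k = 1
    rw [Fin.val_last, div_self (ne_of_gt hkR)]
  have hmono : StrictMono t := by
    intro a b hab
    rw [← Subtype.coe_lt_coe]
    show ((a:ℕ):ℝ)/k < ((b:ℕ):ℝ)/k
    apply div_lt_div_of_pos_right ?_ hkR
    exact_mod_cast hab
  -- key distance estimate on w
  have key : ∀ (j : Fin k) (s : unitInterval),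
      s ∈ Set.Icc (t j.castSucc) (t j.succ) → dist (w s) (Pt j) < ε/2 := by
    intro j s hs
    apply hδ'
    have h1 : ((j.castSucc : ℕ):ℝ)/k ≤ (s:ℝ) := Subtype.coe_le_coe.mpr hs.1
    have h2 : (s:ℝ) ≤ ((j.succ : ℕ):ℝ)/k := Subtype.coe_le_coe.mpr hs.2
    rw [Fin.coe_castSucc] at h1
    rw [Fin.val_succ] at h2
    push_cast at h2
    rw [Subtype.dist_eq, Real.dist_eq]
    show |(s:ℝ) - ((j.castSucc : ℕ):ℝ)/k| < δ
    rw [Fin.coe_castSucc, abs_of_nonneg (by linarith)]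
    have hsplit : (((j:ℕ):ℝ)+1)/k = ((j:ℕ):ℝ)/k + 1/k := by ring
    rw [hsplit] at h2
    linarith
  have hcover : ∀ j : Fin k, IsOpen (U j) ∧
      ⇑w '' Set.Icc (t j.castSucc) (t j.succ) ⊆ U j ∧
      Pt j ∈ ⇑w '' Set.Icc (t j.castSucc) (t j.succ) := by
    intro j
    refine ⟨Metric.isOpen_ball, ?_, ?_⟩
    · rintro x ⟨s, hs, rfl⟩
      exact Metric.mem_ball.mpr (key j s hs)
    · refine ⟨t j.castSucc, ⟨le_refl _, (hmono.monotone (le_of_lt ?_))⟩, rfl⟩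
      exact Fin.castSucc_lt_succ (i := j)
  obtain ⟨v, hv, hvh⟩ := H k hk U Pt t ht0 ht1 hmono hcover
  refine ⟨v.symm, cancel_left w v α hvh, ?_⟩
  intro s
  obtain ⟨j, hj1, hj2⟩ := exists_seg k hk (s:ℝ) s.2.1 s.2.2
  have hmem : s ∈ Set.Icc (t j.castSucc) (t j.succ) := by
    constructor
    · rw [← Subtype.coe_le_coe]
      show ((j.castSucc : ℕ):ℝ)/k ≤ (s:ℝ)
      rw [Fin.coe_castSucc]; exact hj1
    · rw [← Subtype.coe_le_coe]
      show (s:ℝ) ≤ ((j.succ : ℕ):ℝ)/k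
      rw [Fin.val_succ]; push_cast; exact hj2
  have h1 : dist (w s) (Pt j) < ε/2 := key j s hmem
  -- the reversed point lies in the reversed interval
  have hjk : (j:ℕ) + 1 ≤ k := j.2
  have hrevval : (j.rev : ℕ) = k - ((j:ℕ) + 1) := Fin.val_rev j
  have hcast1 : ((k - ((j:ℕ)+1) : ℕ):ℝ) = (k:ℝ) - ((j:ℕ):ℝ) - 1 := by
    push_cast [Nat.cast_sub hjk]; ring
  have hmul1 : ((j:ℕ):ℝ) ≤ (s:ℝ) * k := by
    rw [div_le_iff₀ hkR] at hj1; exact hj1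
  have hmul2 : (s:ℝ) * k ≤ ((j:ℕ):ℝ) + 1 := by
    rw [le_div_iff₀ hkR] at hj2; exact hj2
  have hmem2 : unitInterval.symm s ∈ Set.Icc (t j.rev.castSucc) (t j.rev.succ) := by
    constructor
    · rw [← Subtype.coe_le_coe]
      show ((j.rev.castSucc : ℕ):ℝ)/k ≤ (unitInterval.symm s : ℝ)
      rw [Fin.coe_castSucc, hrevval, unitInterval.coe_symm_eq, hcast1, div_le_iff₀ hkR]
      nlinarith
    · rw [← Subtype.coe_le_coe]
      show (unitInterval.symm s : ℝ) ≤ ((j.rev.succ : ℕ):ℝ)/k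
      rw [Fin.val_succ, unitInterval.coe_symm_eq]
      push_cast [hrevval, Nat.cast_sub hjk]
      rw [le_div_iff₀ hkR]
      nlinarith
  have h2 : v (unitInterval.symm s) ∈ U j := by
    have := (hv j.rev).1 ⟨unitInterval.symm s, hmem2, rfl⟩
    rwa [Fin.rev_rev] at this
  rw [hUdef] at h2
  simp only [Metric.mem_ball] at h2
  have h3 : v.symm s = v (unitInterval.symm s) := rfl
  rw [h3]
  calc dist (w s) (v (unitInterval.symm s))
      ≤ dist (w s) (Pt j) + dist (Pt j) (v (unitInterval.symm s)) := dist_triangle _ _ _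
    _ < ε/2 + ε/2 := by rw [dist_comm (Pt j)]; exact add_lt_add h1 h2
    _ = ε := by ring
end

section
/- Let X be a path connected, locally path connected metric space. If there are no pairs of paths [0,1] → X that are close relative to the endpoints {0,1}, then X is homotopically path Hausdorff. -/
private lemma homotopic_assoc {X : Type*} [TopologicalSpace X] {a b c d : X}
    (p : Path a b) (q : Path b c) (r : Path c d) :
    ((p.trans q).trans r).Homotopic (p.trans (q.trans r)) :=
  ⟨Path.Homotopy.transAssoc p q r⟩

/-- `w⁻¹ * (w * c) ≃ c`. -/
private lemma homotopic_symm_trans_cancel {X : Type*} [TopologicalSpace X] {P Q R : X}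
    (w : Path P Q) (c : Path Q R) :
    (w.symm.trans (w.trans c)).Homotopic c := by
  have h1 : (w.symm.trans (w.trans c)).Homotopic ((w.symm.trans w).trans c) :=
    (homotopic_assoc w.symm w c).symm
  have h2 : ((w.symm.trans w).trans c).Homotopic ((Path.refl Q).trans c) :=
    Path.Homotopic.hcomp ⟨(Path.Homotopy.reflSymmTrans w).symm⟩ (Path.Homotopic.refl c)
  exact (h1.trans h2).trans ⟨Path.Homotopy.reflTrans c⟩

/-- `w * (w⁻¹ * c) ≃ c`. -/
private lemma homotopic_trans_symm_cancel {X : Type*} [TopologicalSpace X] {P Q R : X}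
    (w : Path P Q) (c : Path P R) :
    (w.trans (w.symm.trans c)).Homotopic c := by
  have h1 : (w.trans (w.symm.trans c)).Homotopic ((w.trans w.symm).trans c) :=
    (homotopic_assoc w w.symm c).symm
  have h2 : ((w.trans w.symm).trans c).Homotopic ((Path.refl P).trans c) :=
    Path.Homotopic.hcomp ⟨(Path.Homotopy.reflTransSymm w).symm⟩ (Path.Homotopic.refl c)
  exact (h1.trans h2).trans ⟨Path.Homotopy.reflTrans c⟩

private lemma homotopic_left_cancel {X : Type*} [TopologicalSpace X] {P Q R : X}
    (w : Path P Q) {a b : Path Q R} (h : (w.trans a).Homotopic (w.trans b)) :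
    a.Homotopic b := by
  have h1 : (w.symm.trans (w.trans a)).Homotopic (w.symm.trans (w.trans b)) :=
    Path.Homotopic.hcomp (Path.Homotopic.refl w.symm) h
  exact ((homotopic_symm_trans_cancel w a).symm.trans h1).trans
    (homotopic_symm_trans_cancel w b)

/-- If a path connected, locally path connected metric space has no pair of close
paths rel the endpoints, then it is homotopically path Hausdorff. -/
theorem no_close_paths_implies_hph {X : Type*} [MetricSpace X] [PathConnectedSpace X]
    [LocallyPathConnectedSpace X]
    (h : ∀ (P Q : X) (v w : Path P Q), ¬PathClose v w) :
    HomotopicallyPathHausdorff X := by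
  intro P Q w α hα
  set u : Path Q P := w.symm.trans α with hu_def
  have hwu : (w.trans u).Homotopic α := homotopic_trans_symm_cancel w α
  -- u is not homotopic to w.symm
  have hne : ¬ u.Homotopic w.symm := by
    intro hh
    apply hα
    have h1 : (w.trans u).Homotopic (w.trans w.symm) :=
      Path.Homotopic.hcomp (Path.Homotopic.refl w) hh
    have h2 : (w.trans w.symm).Homotopic (Path.refl P) :=
      ⟨(Path.Homotopy.reflTransSymm w).symm⟩
    exact (hwu.symm.trans h1).trans h2
  -- extract ε from non-closeness
  have hA := h Q P u w.symm
  rw [PathClose] at hA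
  have hB := not_and.mp hA hne
  push_neg at hB
  obtain ⟨ε, hε, hsep⟩ := hB
  -- uniform continuity of w
  have huc : UniformContinuous w := CompactSpace.uniformContinuous_of_continuous w.continuous
  rw [Metric.uniformContinuous_iff] at huc
  obtain ⟨δ, hδ, hδ'⟩ := huc (ε / 4) (by positivity)
  obtain ⟨k0, hk0⟩ := exists_nat_one_div_lt hδ
  set K : ℕ := k0 + 1 with hK_def
  have hKpos : (0 : ℝ) < K := by positivity
  have hmesh : (1 : ℝ) / K < δ := by exact_mod_cast hk0
  -- partition
  have tmem : ∀ j : Fin (K + 1), (j.val : ℝ) / K ∈ Set.Icc (0 : ℝ) 1 := by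
    intro j
    constructor
    · positivity
    · rw [div_le_one hKpos]
      exact_mod_cast Nat.lt_succ_iff.mp j.isLt
  set t : Fin (K + 1) → unitInterval := fun j => ⟨(j.val : ℝ) / K, tmem j⟩ with ht_def
  have htc : ∀ j : Fin (K + 1), (t j : ℝ) = (j.val : ℝ) / K := fun j => rfl
  refine ⟨K, Nat.succ_pos k0, fun j => Metric.ball (w (t j.castSucc)) (ε / 4),
    fun j => w (t j.castSucc), t, ?_, ?_, ?_, ?_, ?_⟩
  · exact Subtype.ext (by simp [htc])
  · exact Subtype.ext (by simp [htc, Fin.last, div_self (ne_of_gt hKpos)])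
  · intro a b hab
    rw [← Subtype.coe_lt_coe, htc, htc]
    exact div_lt_div_of_pos_right (by exact_mod_cast hab) hKpos
  · -- cover conditions for w
    intro j
    have hle : t j.castSucc ≤ t j.succ := by
      rw [← Subtype.coe_le_coe, htc, htc]
      gcongr
      simp [Fin.coe_castSucc, Fin.val_succ]
    refine ⟨Metric.isOpen_ball, ?_, ⟨t j.castSucc, ⟨le_refl _, hle⟩, rfl⟩⟩
    rintro x ⟨s, hs, rfl⟩
    rw [Metric.mem_ball]
    apply hδ'
    rw [Subtype.dist_eq, Real.dist_eq, htc]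
    have h1 : (j.castSucc.val : ℝ) / K ≤ (s : ℝ) := by
      have := hs.1; rwa [← Subtype.coe_le_coe, htc] at this
    have h2 : (s : ℝ) ≤ (j.succ.val : ℝ) / K := by
      have := hs.2; rwa [← Subtype.coe_le_coe, htc] at this
    have h3 : (j.succ.val : ℝ) = (j.castSucc.val : ℝ) + 1 := by
      simp [Fin.val_succ, Fin.coe_castSucc]
    rw [abs_of_nonneg (by linarith)]
    have : (s : ℝ) - (j.castSucc.val : ℝ) / K ≤ 1 / K := by
      rw [h3] at h2
      have : ((j.castSucc.val : ℝ) + 1) / K = (j.castSucc.val : ℝ) / K + 1 / K := by ring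
      linarith [h2.trans_eq this]
    linarith
  · -- main condition on return paths
    intro v hv hcontra
    have hvu : v.Homotopic u := homotopic_left_cancel w (hcontra.trans hwu.symm)
    obtain ⟨s, hsge⟩ := hsep v hvu
    -- find j with s ∈ [j/K, (j+1)/K]
    have hs0 : (0 : ℝ) ≤ (s : ℝ) := s.2.1
    have hs1 : (s : ℝ) ≤ 1 := s.2.2
    set m : ℕ := min ⌊(s : ℝ) * K⌋₊ (K - 1) with hm_def
    have hmK : m < K := lt_of_le_of_lt (min_le_right _ _) (by omega)
    set j : Fin K := ⟨m, hmK⟩ with hj_def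
    have hjl : ((j.castSucc.val : ℝ)) / K ≤ (s : ℝ) := by
      have h1 : (m : ℝ) ≤ ⌊(s : ℝ) * K⌋₊ := by exact_mod_cast min_le_left _ _
      have h2 : (⌊(s : ℝ) * K⌋₊ : ℝ) ≤ (s : ℝ) * K := Nat.floor_le (by positivity)
      rw [div_le_iff₀ hKpos]
      simpa [Fin.coe_castSucc] using h1.trans h2
    have hjr : (s : ℝ) ≤ ((j.succ.val : ℝ)) / K := by
      rw [le_div_iff₀ hKpos]
      have hjs : (j.succ.val : ℝ) = (m : ℝ) + 1 := by simp [Fin.val_succ, hj_def]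
      rw [hjs]
      by_cases hc : ⌊(s : ℝ) * K⌋₊ ≤ K - 1
      · have hm : m = ⌊(s : ℝ) * K⌋₊ := min_eq_left hc
        have := Nat.lt_floor_add_one ((s : ℝ) * K)
        rw [← hm] at this
        linarith
      · have hm : m = K - 1 := min_eq_right (le_of_not_ge hc)
        have : (m : ℝ) + 1 = (K : ℝ) := by
          rw [hm]; push_cast [Nat.sub_add_cancel (by omega : 1 ≤ K)]; ring_nf
          norm_num [Nat.cast_sub (by omega : 1 ≤ K)]
        rw [this]
        nlinarith
    have hsmem : s ∈ Set.Icc (t j.castSucc) (t j.succ) := by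
      constructor
      · rw [← Subtype.coe_le_coe, htc]; exact hjl
      · rw [← Subtype.coe_le_coe, htc]; exact hjr
    -- v s is ε/4-close to Pt j.rev = w(t (j.rev).castSucc)
    have hv1 : dist (v s) (w (t (j.rev).castSucc)) < ε / 4 := by
      have := (hv j).1 ⟨s, hsmem, rfl⟩
      rwa [Metric.mem_ball] at this
    -- w.symm s is ε/4-close to the same point
    have hrev : ((j.rev).castSucc.val : ℝ) = (K : ℝ) - 1 - (m : ℝ) := by
      have : (j.rev).castSucc.val = K - (m + 1) := by simp [Fin.coe_castSucc, Fin.val_rev, hj_def]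
      rw [this]
      have hmle : m + 1 ≤ K := hmK
      push_cast [Nat.cast_sub hmle]
      ring
    have hv2 : dist (w.symm s) (w (t (j.rev).castSucc)) < ε / 4 := by
      have hsymm : w.symm s = w (unitInterval.symm s) := rfl
      rw [hsymm]
      apply hδ'
      rw [Subtype.dist_eq, Real.dist_eq, unitInterval.coe_symm_eq, htc, hrev]
      have key : (1 : ℝ) - (s : ℝ) - ((K : ℝ) - 1 - (m : ℝ)) / K
          = ((m : ℝ) + 1) / K - (s : ℝ) := by
        field_simp; ring
      rw [key]
      have h1 : (0 : ℝ) ≤ ((m : ℝ) + 1) / K - (s : ℝ) := by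
        have : (s : ℝ) ≤ ((m : ℝ) + 1) / K := by
          have hjs : (j.succ.val : ℝ) = (m : ℝ) + 1 := by simp [Fin.val_succ, hj_def]
          rw [← hjs]; exact hjr
        linarith
      rw [abs_of_nonneg h1]
      have h2 : (m : ℝ) / K ≤ (s : ℝ) := by
        have : (j.castSucc.val : ℝ) = (m : ℝ) := by simp [Fin.coe_castSucc, hj_def]
        rw [← this]; exact hjl
      have h3 : ((m : ℝ) + 1) / K - (m : ℝ) / K = 1 / K := by ring
      linarith
    have : dist (w.symm s) (v s) < ε := by
      calc dist (w.symm s) (v s)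
          ≤ dist (w.symm s) (w (t (j.rev).castSucc)) + dist (w (t (j.rev).castSucc)) (v s) :=
            dist_triangle _ _ _
        _ < ε / 4 + ε / 4 := by rw [dist_comm (w (t (j.rev).castSucc))]; linarith
        _ < ε := by linarith
    linarith
end

section
/- Let (X, x₀) be a pointed space. If α : (S¹, *) → (X, x₀) is a small loop (every neighborhood of x₀ contains a pointed-homotopic representative of α), then for every open cover 𝒰 of X, the class [α] lies in the Spanier group π₁(𝒰, x₀). Consequently the subgroup π₁ˢ(X, x₀) generated by small loops is contained in the Spanier group π₁ˢᵖ(X, x₀) = ⋂_𝒰 π₁(𝒰, x₀). -/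
universe u

/-- The element of the fundamental group determined by a loop. -/
noncomputable def pathClass {X : Type u} [TopologicalSpace X] {x : X} (α : Path x x) :
    FundamentalGroup X x :=
  @FundamentalGroup.fromPath X _ x ⟦α⟧

/-- The Spanier group of `(X, x₀)` with respect to a cover `𝒰`: the subgroup of
`π₁(X, x₀)` generated by classes of loops `u * v * u⁻¹` where `u` is a path from `x₀`
to a point `y` and `v` is a loop at `y` contained in some member of `𝒰`. -/
noncomputable def spanierGroup {X : Type u} [TopologicalSpace X] (𝒰 : Set (Set X)) (x₀ : X) :
    Subgroup (FundamentalGroup X x₀) :=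
  Subgroup.closure {g | ∃ U ∈ 𝒰, ∃ (y : X) (u : Path x₀ y) (v : Path y y),
    Set.range v ⊆ U ∧ g = pathClass ((u.trans v).trans u.symm)}

/-- `𝒰` is an open cover of `X`. -/
def IsOpenCover {X : Type u} [TopologicalSpace X] (𝒰 : Set (Set X)) : Prop :=
  (∀ U ∈ 𝒰, IsOpen U) ∧ ⋃₀ 𝒰 = Set.univ

/-- A loop `α` at `x₀` is small if every open neighborhood of `x₀` contains a loop
based at `x₀` homotopic rel basepoint to `α`. -/
def IsSmallLoop {X : Type u} [TopologicalSpace X] {x₀ : X} (α : Path x₀ x₀) : Prop :=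
  ∀ U : Set X, IsOpen U → x₀ ∈ U →
    ∃ β : Path x₀ x₀, Set.range β ⊆ U ∧ β.Homotopic α

lemma pathClass_eq_of_homotopic {X : Type u} [TopologicalSpace X] {x : X}
    {α β : Path x x} (h : α.Homotopic β) : pathClass α = pathClass β := by
  unfold pathClass
  congr 1
  exact Quotient.sound h

/-- The class of a small loop lies in the Spanier group with respect to every open
cover; consequently, the subgroup generated by small loops is contained in the
Spanier group of `X` (the intersection over all open covers). -/
theorem small_loops_in_spanierGroup {X : Type u} [TopologicalSpace X] (x₀ : X) :
    (∀ α : Path x₀ x₀, IsSmallLoop α →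
      ∀ 𝒰 : Set (Set X), IsOpenCover 𝒰 → pathClass α ∈ spanierGroup 𝒰 x₀) ∧
    ∀ 𝒰 : Set (Set X), IsOpenCover 𝒰 →
      Subgroup.closure {g | ∃ α : Path x₀ x₀, IsSmallLoop α ∧ g = pathClass α} ≤
        spanierGroup 𝒰 x₀ := by
  have main : ∀ α : Path x₀ x₀, IsSmallLoop α →
      ∀ 𝒰 : Set (Set X), IsOpenCover 𝒰 → pathClass α ∈ spanierGroup 𝒰 x₀ := by
    intro α hα 𝒰 h𝒰
    obtain ⟨U, hU𝒰, hx₀U⟩ : ∃ U ∈ 𝒰, x₀ ∈ U := by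
      have : x₀ ∈ ⋃₀ 𝒰 := h𝒰.2 ▸ Set.mem_univ x₀
      simpa [Set.mem_sUnion] using this
    obtain ⟨β, hβU, hβα⟩ := hα U (h𝒰.1 U hU𝒰) hx₀U
    apply Subgroup.subset_closure
    refine ⟨U, hU𝒰, x₀, Path.refl x₀, β, hβU, ?_⟩
    apply pathClass_eq_of_homotopic
    refine hβα.symm.trans ?_
    rw [Path.refl_symm]
    have h1 : ((Path.refl x₀).trans β).Homotopic β := ⟨Path.Homotopy.reflTrans β⟩
    have h2 : (((Path.refl x₀).trans β).trans (Path.refl x₀)).Homotopic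
        ((Path.refl x₀).trans β) := ⟨Path.Homotopy.transRefl _⟩
    exact h1.symm.trans h2.symm
  refine ⟨main, fun 𝒰 h𝒰 => ?_⟩
  rw [Subgroup.closure_le]
  rintro g ⟨α, hα, rfl⟩
  exact main α hα 𝒰 h𝒰
end
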